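/- Let n be a positive natural number and β a real number such that β - n + 1 is not a nonpositive integer (i.e. β - n + 1 ≠ -k for every natural number k). Then ∑_{k=1}^{n} (-1)^(k-1) / (k · (n-k)! · Γ(β - n + k + 1)) = (ψ(β+1) - ψ(β-n+1)) / (n! · Γ(β - n + 1)), where ψ denotes the digamma function. -/

import Mathlib

open Finset

/-- The digamma function `ψ(x) = Γ'(x)/Γ(x)`. -/
noncomputable def digamma (x : ℝ) : ℝ := deriv Real.Gamma x / Real.Gamma x

lemma aux_deriv_gamma_succ {x : ℝ} (hx : ∀ m : ℕ, x ≠ -m) :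
    deriv Real.Gamma (x + 1) = Real.Gamma x + x * deriv Real.Gamma x := by
  have hx0 : x ≠ 0 := by simpa using hx 0
  have hdiff : DifferentiableAt ℝ Real.Gamma x := Real.differentiableAt_Gamma hx
  have h1 : HasDerivAt (fun y : ℝ => y * Real.Gamma y)
      (Real.Gamma x + x * deriv Real.Gamma x) x := by
    have := (hasDerivAt_id' x).mul hdiff.hasDerivAt
    rw [one_mul] at this
    exact this
  have hx1 : ∀ m : ℕ, x + 1 ≠ -m := by
    intro m h
    apply hx (m + 1)
    push_cast
    linarith
  have hdiff1 : DifferentiableAt ℝ Real.Gamma (x + 1) := Real.differentiableAt_Gamma hx1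
  have h2 : HasDerivAt (fun y : ℝ => Real.Gamma (y + 1)) (deriv Real.Gamma (x + 1)) x := by
    have := hdiff1.hasDerivAt.comp_add_const x 1
    simpa using this
  have heq : (fun y : ℝ => y * Real.Gamma y) =ᶠ[nhds x] fun y => Real.Gamma (y + 1) := by
    filter_upwards [isOpen_ne.mem_nhds hx0] with y hy
    exact (Real.Gamma_add_one hy).symm
  exact (h2.congr_of_eventuallyEq heq).unique h1

lemma digamma_add_one {x : ℝ} (hx : ∀ m : ℕ, x ≠ -m) :
    digamma (x + 1) = digamma x + 1 / x := by
  have hx0 : x ≠ 0 := by simpa using hx 0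
  have hG : Real.Gamma x ≠ 0 := Real.Gamma_ne_zero hx
  rw [digamma, digamma, aux_deriv_gamma_succ hx, Real.Gamma_add_one hx0]
  field_simp
  ring

lemma digamma_add_nat {x : ℝ} (hx : ∀ m : ℕ, x ≠ -m) (n : ℕ) :
    digamma (x + n) = digamma x + ∑ j ∈ range n, 1 / (x + j) := by
  induction n with
  | zero => simp
  | succ n ih =>
    have hxn : ∀ m : ℕ, x + n ≠ -m := by
      intro m h
      apply hx (m + n)
      push_cast
      linarith
    have : x + ((n : ℝ) + 1) = (x + n) + 1 := by ring
    rw [show ((n + 1 : ℕ) : ℝ) = (n : ℝ) + 1 by push_cast; ring, this,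
      digamma_add_one hxn, ih, sum_range_succ]
    ring

lemma lemB : ∀ (n : ℕ) (x : ℝ), (∀ j : ℕ, x + j ≠ 0) →
    ∑ m ∈ range (n + 1), (-1 : ℝ) ^ m * (n.descFactorial m : ℝ) /
      ∏ j ∈ range (m + 1), (x + j) = 1 / (x + n) := by
  intro n
  induction n with
  | zero =>
    intro x hx
    simp
  | succ n ih =>
    intro x hx
    have hx0 : x ≠ 0 := by simpa using hx 0
    have hx' : ∀ j : ℕ, (x + 1) + j ≠ 0 := by
      intro j h
      apply hx (j + 1)
      push_cast
      linarith
    rw [sum_range_succ']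
    have hterm : ∀ i ∈ range (n + 1),
        (-1 : ℝ) ^ (i + 1) * ((n + 1).descFactorial (i + 1) : ℝ) /
          ∏ j ∈ range (i + 1 + 1), (x + j)
        = (-((n : ℝ) + 1) / x) *
          ((-1 : ℝ) ^ i * (n.descFactorial i : ℝ) / ∏ j ∈ range (i + 1), ((x + 1) + j)) := by
      intro i _
      have hprod : ∏ j ∈ range (i + 1 + 1), (x + (j : ℝ))
          = (∏ j ∈ range (i + 1), ((x + 1) + (j : ℝ))) * x := by
        rw [prod_range_succ']
        congr 1
        · exact prod_congr rfl fun j _ => by push_cast; ring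
        · simp
      have hQ : (∏ j ∈ range (i + 1), ((x + 1) + (j : ℝ))) ≠ 0 :=
        prod_ne_zero_iff.mpr fun j _ => hx' j
      rw [hprod, Nat.succ_descFactorial_succ]
      push_cast
      field_simp
      ring
    rw [sum_congr rfl hterm, ← mul_sum, ih (x + 1) hx']
    have h1 : (x + 1) + (n : ℝ) ≠ 0 := hx' n
    have h2 : x + ((n : ℕ) + 1 : ℕ) ≠ 0 := hx (n + 1)
    push_cast at h2 ⊢
    simp only [Nat.descFactorial_zero, Nat.cast_one, pow_zero]
    rw [prod_range_one]
    push_cast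
    rw [add_zero]
    field_simp
    ring

lemma lemA (n : ℕ) (x : ℝ) (hx : ∀ j : ℕ, x + j ≠ 0) :
    ∑ m ∈ range n, (-1 : ℝ) ^ m * (n.descFactorial (m + 1) : ℝ) /
      (((m : ℝ) + 1) * ∏ j ∈ range (m + 1), (x + j))
    = ∑ j ∈ range n, 1 / (x + j) := by
  induction n with
  | zero => simp
  | succ n ih =>
    have hsplit : ∀ m ∈ range (n + 1),
        (-1 : ℝ) ^ m * ((n + 1).descFactorial (m + 1) : ℝ) /
          (((m : ℝ) + 1) * ∏ j ∈ range (m + 1), (x + j))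
        = (-1 : ℝ) ^ m * (n.descFactorial (m + 1) : ℝ) /
            (((m : ℝ) + 1) * ∏ j ∈ range (m + 1), (x + j))
          + (-1 : ℝ) ^ m * (n.descFactorial m : ℝ) / ∏ j ∈ range (m + 1), (x + j) := by
      intro m hm
      have hmn : m ≤ n := by simpa [Nat.lt_succ_iff] using hm
      have hcast : (((n + 1).descFactorial (m + 1) : ℕ) : ℝ)
          = (n.descFactorial (m + 1) : ℝ) + ((m : ℝ) + 1) * (n.descFactorial m : ℝ) := by
        rw [Nat.succ_descFactorial_succ, Nat.descFactorial_succ]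
        have : (n + 1) * n.descFactorial m
            = (n - m) * n.descFactorial m + (m + 1) * n.descFactorial m := by
          rw [← Nat.add_mul]
          congr 1
          omega
        rw [this]
        push_cast
        ring
      have hP : (∏ j ∈ range (m + 1), (x + (j : ℝ))) ≠ 0 :=
        prod_ne_zero_iff.mpr fun j _ => hx j
      have hm1 : ((m : ℝ) + 1) ≠ 0 := by positivity
      rw [hcast]
      field_simp
    rw [sum_congr rfl hsplit, sum_add_distrib, lemB n x hx]
    have hlast : (-1 : ℝ) ^ n * (n.descFactorial (n + 1) : ℝ) /
        (((n : ℝ) + 1) * ∏ j ∈ range (n + 1), (x + j)) = 0 := by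
      rw [Nat.descFactorial_eq_zero_iff_lt.mpr (Nat.lt_succ_self n)]
      simp
    rw [sum_range_succ, hlast, add_zero, ih, sum_range_succ]

lemma Gamma_shift (x : ℝ) (hx : ∀ j : ℕ, x + j ≠ 0) (k : ℕ) :
    Real.Gamma (x + k) = (∏ j ∈ range k, (x + j)) * Real.Gamma x := by
  induction k with
  | zero => simp
  | succ k ih =>
    have : x + ((k : ℝ) + 1) = (x + k) + 1 := by ring
    rw [show ((k + 1 : ℕ) : ℝ) = (k : ℝ) + 1 by push_cast; ring, this,
      Real.Gamma_add_one (hx k), ih, prod_range_succ]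
    ring

/-- The finite-sum identity
`∑_{k=1}^{n} (-1)^(k-1) / (k (n-k)! Γ(β-n+k+1)) = (ψ(β+1) - ψ(β-n+1)) / (n! Γ(β-n+1))`,
for `n ≥ 1` and `β - n + 1` not a nonpositive integer. -/
theorem sum_digamma_identity (n : ℕ) (hn : 0 < n) (β : ℝ)
    (hβ : ∀ k : ℕ, β - n + 1 ≠ -k) :
    (∑ k ∈ Finset.Icc 1 n,
        (-1 : ℝ) ^ (k - 1) /
          (k * (Nat.factorial (n - k)) * Real.Gamma (β - n + k + 1))) =
      (digamma (β + 1) - digamma (β - n + 1)) /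
        (Nat.factorial n * Real.Gamma (β - n + 1)) := by
  set x : ℝ := β - n + 1 with hxdef
  have hxm : ∀ m : ℕ, x ≠ -m := hβ
  have hx : ∀ j : ℕ, x + j ≠ 0 := fun j h => hβ j (by linarith)
  have hG : Real.Gamma x ≠ 0 := Real.Gamma_ne_zero hxm
  rw [← Finset.Ico_add_one_right_eq_Icc, Finset.sum_Ico_eq_sum_range]
  simp only [Nat.add_sub_cancel]
  have hterm : ∀ i ∈ range n,
      (-1 : ℝ) ^ ((1 + i) - 1) /
        (((1 + i : ℕ) : ℝ) * (((n - (1 + i)).factorial : ℕ) : ℝ) *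
          Real.Gamma (β - n + ((1 + i : ℕ) : ℝ) + 1))
      = ((-1 : ℝ) ^ i * (n.descFactorial (i + 1) : ℝ) /
          (((i : ℝ) + 1) * ∏ j ∈ range (i + 1), (x + j))) /
        ((n.factorial : ℝ) * Real.Gamma x) := by
    intro i hi
    have hin : i + 1 ≤ n := mem_range.mp hi
    have e1 : (1 + i) - 1 = i := by omega
    have e2 : n - (1 + i) = n - (i + 1) := by omega
    have e3 : ((1 + i : ℕ) : ℝ) = (i : ℝ) + 1 := by push_cast; ring
    have harg : β - (n : ℝ) + ((1 + i : ℕ) : ℝ) + 1 = x + ((i + 1 : ℕ) : ℝ) := by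
      rw [hxdef]; push_cast; ring
    have hfacid : ((n.factorial : ℕ) : ℝ)
        = (((n - (i + 1)).factorial : ℕ) : ℝ) * ((n.descFactorial (i + 1) : ℕ) : ℝ) := by
      exact_mod_cast (Nat.factorial_mul_descFactorial hin).symm
    have hm1 : ((i : ℝ) + 1) ≠ 0 := by positivity
    have hF : (((n - (i + 1)).factorial : ℕ) : ℝ) ≠ 0 := by
      exact_mod_cast (Nat.factorial_pos _).ne'
    have hD : ((n.descFactorial (i + 1) : ℕ) : ℝ) ≠ 0 := by
      have : ¬ (n < i + 1) := by omega
      exact Nat.cast_ne_zero.mpr fun h => this (Nat.descFactorial_eq_zero_iff_lt.mp h)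
    have hP : (∏ j ∈ range (i + 1), (x + (j : ℝ))) ≠ 0 :=
      prod_ne_zero_iff.mpr fun j _ => hx j
    rw [e1, e2, harg, e3, Gamma_shift x hx (i + 1), hfacid, div_div,
      div_eq_div_iff (mul_ne_zero (mul_ne_zero hm1 hF) (mul_ne_zero hP hG))
        (mul_ne_zero (mul_ne_zero hm1 hP) (mul_ne_zero (mul_ne_zero hF hD) hG))]
    ring
  rw [sum_congr rfl hterm, ← sum_div, lemA n x hx]
  have hb1 : β + 1 = x + (n : ℝ) := by rw [hxdef]; ring
  rw [hb1, digamma_add_nat hxm n]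
  ring
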